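/- Let n ≥ 1, 0 ≤ k ≤ n−1, and q ∈ ℝ^n. Let J be the (k+1) × n matrix whose (i,j) entry is the partial derivative ∂s_{2i}/∂x_j evaluated at q, namely J_{ij} = 2i·q_j^{2i−1}, for 1 ≤ i ≤ k+1 and 1 ≤ j ≤ n. Then the nonzero coordinates of q take at most k distinct absolute values (i.e. the set {|q_i| : q_i ≠ 0} has cardinality at most k) if and only if the rank of J is at most k. -/

import Mathlib

/-- Corollary 2.3 for `G = Bₙ` with the even power sums `s₂, s₄, …` as basic
invariants: the nonzero coordinates of `q ∈ ℝⁿ` take at most `k` distinct absolute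
values if and only if the Jacobian of `s₂, …, s_{2(k+1)}` at `q`, the `(k+1) × n`
matrix with entries `J_{ij} = 2i·q_j^{2i-1}` (for `1 ≤ i ≤ k+1`), has rank at most `k`. -/
theorem stratum_iff_jacobian_rank_Bn
    (n : ℕ) (hn : 1 ≤ n) (k : ℕ) (hk : k ≤ n - 1) (q : Fin n → ℝ) :
    ((fun i => |q i|) '' {i | q i ≠ 0}).ncard ≤ k ↔
      (Matrix.of fun (i : Fin (k + 1)) (j : Fin n) =>
        (2 * ((i : ℕ) + 1) : ℝ) * q j ^ (2 * (i : ℕ) + 1)).rank ≤ k := by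
  classical
  set J : Matrix (Fin (k + 1)) (Fin n) ℝ :=
    Matrix.of fun (i : Fin (k + 1)) (j : Fin n) =>
      (2 * ((i : ℕ) + 1) : ℝ) * q j ^ (2 * (i : ℕ) + 1) with hJ
  set A : Set ℝ := (fun i => |q i|) '' {i | q i ≠ 0} with hA
  have hAfin : A.Finite := (Set.toFinite _).image _
  haveI : Fintype ↥A := hAfin.fintype
  have hcard : A.ncard = Fintype.card ↥A := by
    rw [← Nat.card_coe_set_eq, Nat.card_eq_fintype_card]
  constructor
  · -- few absolute values ⟹ low rank
    intro h
    set P : Matrix (Fin (k + 1)) ↥A ℝ :=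
      Matrix.of fun i a => (2 * ((i : ℕ) + 1) : ℝ) * (a : ℝ) ^ (2 * (i : ℕ) + 1) with hP
    set Q : Matrix ↥A (Fin n) ℝ :=
      Matrix.of fun a j => if (a : ℝ) = |q j| then q j / (a : ℝ) else 0 with hQ
    have hfac : J = P * Q := by
      ext i j
      rw [Matrix.mul_apply]
      by_cases hq : q j = 0
      · simp only [hJ, hP, hQ, Matrix.of_apply, hq, abs_zero]
        rw [Finset.sum_eq_zero, zero_pow (by omega), mul_zero]
        intro a _
        have ha : (a : ℝ) ≠ 0 := by
          obtain ⟨i', hi', hv⟩ := a.2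
          rw [← hv]
          exact abs_ne_zero.2 hi'
        simp [ha]
      · have hmem : |q j| ∈ A := ⟨j, hq, rfl⟩
        rw [Finset.sum_eq_single (⟨|q j|, hmem⟩ : ↥A)]
        · simp only [hJ, hP, hQ, Matrix.of_apply, if_pos rfl, if_true]
          have habs : |q j| ^ (2 * (i : ℕ) + 1) * (q j / |q j|)
              = q j ^ (2 * (i : ℕ) + 1) := by
            have h1 : |q j| ≠ 0 := abs_ne_zero.2 hq
            field_simp
            rw [pow_succ, pow_succ, pow_mul, pow_mul, sq_abs, mul_assoc]
            ring
          linear_combination (-(2 : ℝ) * ((i : ℕ) + 1)) * habs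
        · intro a _ hne
          have : (a : ℝ) ≠ |q j| := fun hh => hne (Subtype.ext hh)
          simp [hQ, this]
        · intro hmem'
          exact absurd (Finset.mem_univ _) hmem'
    calc J.rank ≤ Q.rank := by rw [hfac]; exact Matrix.rank_mul_le_right P Q
      _ ≤ Fintype.card ↥A := Q.rank_le_card_height
      _ ≤ k := by rw [← hcard]; exact h
  · -- low rank ⟹ few absolute values
    intro h
    by_contra hcon
    push_neg at hcon
    have hle : k + 1 ≤ Fintype.card ↥A := by rw [← hcard]; omega
    obtain ⟨e⟩ := Function.Embedding.nonempty_of_card_le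
      (show Fintype.card (Fin (k + 1)) ≤ Fintype.card ↥A by simpa using hle)
    have hwit : ∀ a : ↥A, ∃ i : Fin n, q i ≠ 0 ∧ |q i| = (a : ℝ) := fun a => a.2
    choose g hg1 hg2 using hwit
    set f : Fin (k + 1) → Fin n := fun l => g (e l) with hf
    have hne : ∀ l, q (f l) ≠ 0 := fun l => hg1 (e l)
    have hinj : Function.Injective fun l => q (f l) ^ 2 := by
      intro l l' hll
      simp only at hll
      have : |q (f l)| = |q (f l')| := (sq_eq_sq_iff_abs_eq_abs _ _).1 hll
      rw [hg2 (e l), hg2 (e l')] at this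
      exact e.injective (Subtype.ext this)
    -- the selected square submatrix
    set M : Matrix (Fin (k + 1)) (Fin (k + 1)) ℝ := J.submatrix id f with hM
    have hMfac : M = Matrix.diagonal (fun i : Fin (k + 1) => (2 * ((i : ℕ) + 1) : ℝ)) *
        (Matrix.vandermonde fun l => q (f l) ^ 2).transpose *
        Matrix.diagonal (fun l => q (f l)) := by
      ext i l
      rw [Matrix.mul_diagonal, Matrix.diagonal_mul, Matrix.transpose_apply,
        Matrix.vandermonde_apply]
      simp only [hM, hJ, Matrix.submatrix_apply, Matrix.of_apply, id]
      rw [pow_succ, pow_mul]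
      ring
    have hdet : M.det ≠ 0 := by
      rw [hMfac, Matrix.det_mul, Matrix.det_mul, Matrix.det_transpose,
        Matrix.det_diagonal, Matrix.det_diagonal]
      refine mul_ne_zero (mul_ne_zero ?_ ?_) ?_
      · exact Finset.prod_ne_zero_iff.2 fun i _ => by positivity
      · exact Matrix.det_vandermonde_ne_zero_iff.2 hinj
      · exact Finset.prod_ne_zero_iff.2 fun l _ => hne l
    set E : Matrix (Fin n) (Fin (k + 1)) ℝ :=
      Matrix.of fun j l => if j = f l then 1 else 0 with hE
    have hJE : J * E = M := by
      ext i l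
      rw [Matrix.mul_apply]
      simp only [hE, Matrix.of_apply, mul_ite, mul_one, mul_zero]
      rw [Finset.sum_ite_eq' Finset.univ (f l) (fun j => J i j)]
      simp [hM]
    have hrankM : M.rank = k + 1 := by
      rw [Matrix.rank_of_isUnit M (Matrix.isUnit_iff_isUnit_det M |>.2
        (isUnit_iff_ne_zero.2 hdet)), Fintype.card_fin]
    have h2 : (J * E).rank ≤ J.rank := Matrix.rank_mul_le_left J E
    rw [hJE, hrankM] at h2
    omega
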